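/- Suppose the generating sets of G and G' have size at most M, so that v_{k+1} ≤ M·v_k and v'_{k+1} ≤ M·v'_k for all k. If x is the first index after x_0 with v'_{⌊g(x)⌋} / v_x ≤ 1, where g increases by at most c + 1 per unit step and v'_{⌊g(x_0)⌋}/v_{x_0} ≥ 1, then at that first crossing time the ratio v'_{⌊g(x)⌋} / v_x lies in the interval [1/M, M^{2c}]. -/
import Mathlib


open Filter Real

/-- at the first time after `x₀` where the ratio `v'_{⌊g(x)⌋} / v_x` drops
to `≤ 1`, the ratio lies in `[1/M, M^{2c}]`. -/
theorem first_crossing_ratio_bound (v v' : ℕ → ℕ)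
    (hv : ∀ k, 0 < v k) (hv' : ∀ k, 0 < v' k) (hmono' : Monotone v')
    (M : ℝ) (hM : 1 ≤ M)
    (hMv : ∀ k : ℕ, (v (k + 1) : ℝ) ≤ M * (v k : ℝ))
    (hMv' : ∀ k : ℕ, (v' (k + 1) : ℝ) ≤ M * (v' k : ℝ))
    (c : ℝ) (hc : 0 < c)
    (g : ℕ → ℝ) (hg0 : ∀ k, 0 ≤ g k)
    (hstep : ∀ k : ℕ, 0 ≤ g (k + 1) - g k ∧ g (k + 1) - g k ≤ c + 1)
    (x₀ x : ℕ) (hxx : x₀ < x)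
    (hstart : 1 ≤ (v' (⌊g x₀⌋.toNat) : ℝ) / (v x₀ : ℝ))
    (hcross : (v' (⌊g x⌋.toNat) : ℝ) / (v x : ℝ) ≤ 1)
    (hfirst : ∀ k : ℕ, x₀ ≤ k → k < x → 1 < (v' (⌊g k⌋.toNat) : ℝ) / (v k : ℝ)) :
    1 / M ≤ (v' (⌊g x⌋.toNat) : ℝ) / (v x : ℝ) ∧
      (v' (⌊g x⌋.toNat) : ℝ) / (v x : ℝ) ≤ M ^ (2 * c : ℝ) := by
  obtain ⟨y, rfl⟩ : ∃ y, x = y + 1 := ⟨x - 1, by omega⟩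
  have hy : x₀ ≤ y := by omega
  have h1 : 1 < (v' (⌊g y⌋.toNat) : ℝ) / (v y : ℝ) := hfirst y hy (by omega)
  have hvy : (0:ℝ) < v y := by exact_mod_cast hv y
  have hvx : (0:ℝ) < v (y+1) := by exact_mod_cast hv (y+1)
  have hlt : (v y : ℝ) < v' (⌊g y⌋.toNat) := by
    rw [lt_div_iff₀ hvy, one_mul] at h1; linarith
  have hgy : g y ≤ g (y+1) := by have := (hstep y).1; linarith
  have hfl : ⌊g y⌋.toNat ≤ ⌊g (y+1)⌋.toNat :=
    Int.toNat_le_toNat (Int.floor_le_floor hgy)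
  have hmono : (v' (⌊g y⌋.toNat) : ℝ) ≤ v' (⌊g (y+1)⌋.toNat) := by
    exact_mod_cast hmono' hfl
  have hMpos : (0:ℝ) < M := lt_of_lt_of_le one_pos hM
  constructor
  · rw [div_le_div_iff₀ hMpos hvx]
    calc (1:ℝ) * v (y+1) = v (y+1) := one_mul _
      _ ≤ M * v y := hMv y
      _ ≤ M * v' (⌊g y⌋.toNat) := by nlinarith
      _ ≤ M * v' (⌊g (y+1)⌋.toNat) := by nlinarith
      _ = (v' (⌊g (y+1)⌋.toNat) : ℝ) * M := mul_comm _ _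
  · calc (v' (⌊g (y+1)⌋.toNat) : ℝ) / (v (y+1) : ℝ) ≤ 1 := hcross
      _ ≤ M ^ (2*c : ℝ) := Real.one_le_rpow hM (by linarith)
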